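/- Conservation of mass and discrete energy inequality for the fully discrete scheme (Lemma 5.2): Let τ > 0 and let (ρ_h^n, m_h^n)_{n≥0} ⊆ Q_h × V_h with ρ_h^n > 0 for all n be generated by the fully discrete scheme. Then for every n ≥ 0: Σ_e ∫_0^{ℓ_e} ρ_h^n dx = Σ_e ∫_0^{ℓ_e} ρ_h^0 dx, and Σ_e ∫_0^{ℓ_e} ( |m_h^n|²/(2ρ_h^n) + P(ρ_h^n) ) dx + τ Σ_{k=1}^n Σ_e ∫_0^{ℓ_e} ( a_e |∂_x m_h^k|²/(ρ_h^k)² + b_e |m_h^k|³/(ρ_h^k)² ) dx ≤ Σ_e ∫_0^{ℓ_e} ( |m_h^0|²/(2ρ_h^0) + P(ρ_h^0) ) dx, where P = P_e on edge e. -/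

import Mathlib

/-- The network pairing `(u, w)_E = Σ_{e∈E} ∫_0^{ℓ_e} u_e w_e dx` of two families of
functions on the edges of a pipe network. -/
noncomputable def pairE {E : Type} [Fintype E] (ℓ : E → ℝ) (u w : E → ℝ → ℝ) : ℝ :=
  ∑ e, ∫ x in (0 : ℝ)..(ℓ e), u e x * w e x

/-- `q` is piecewise constant on the uniform mesh of `[0, ℓ e]` into `N e` subintervals,
for every edge `e`.  This is the space `Q_h` of the mixed finite element method
(the value at the right endpoint `ℓ e` is irrelevant). -/
def IsPwConst {E : Type} (N : E → ℕ) (ℓ : E → ℝ) (q : E → ℝ → ℝ) : Prop :=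
  ∀ e, ∀ i : ℕ, i < N e →
    ∀ x ∈ Set.Ico ((i : ℝ) * ℓ e / (N e : ℝ)) (((i : ℝ) + 1) * ℓ e / (N e : ℝ)),
      q e x = q e ((i : ℝ) * ℓ e / (N e : ℝ))

/-- `v` is continuous on `[0, ℓ e]` and affine on each subinterval of the uniform mesh
of `[0, ℓ e]` into `N e` subintervals, for every edge `e`. -/
def IsPwAffine {E : Type} (N : E → ℕ) (ℓ : E → ℝ) (v : E → ℝ → ℝ) : Prop :=
  (∀ e, ContinuousOn (v e) (Set.Icc 0 (ℓ e))) ∧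
  (∀ e, ∀ i : ℕ, i < N e → ∃ α β : ℝ,
    ∀ x ∈ Set.Icc ((i : ℝ) * ℓ e / (N e : ℝ)) (((i : ℝ) + 1) * ℓ e / (N e : ℝ)),
      v e x = α * x + β)

/-- The vertex sum `Σ_{e∈E(w)} f_e(w) n_e(w)` at a vertex `w`, where `n_e(w) = -1` if
`w` is the initial vertex `src e`, `n_e(w) = +1` if `w` is the terminal vertex `dst e`,
and a function `f_e` is evaluated at `src e` as `f e 0` and at `dst e` as `f e (ℓ e)`. -/
noncomputable def vtxSum {V E : Type} [Fintype E] [DecidableEq V]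
    (src dst : E → V) (ℓ : E → ℝ) (f : E → ℝ → ℝ) (w : V) : ℝ :=
  ∑ e, ((if dst e = w then f e (ℓ e) else 0) - (if src e = w then f e 0 else 0))

/-- The space `V_h`: continuous piecewise affine families that satisfy the conservative
coupling condition `Σ_{e∈E(w)} v_e(w) n_e(w) = 0` at every vertex `w`. -/
def InVh {V E : Type} [Fintype E] [DecidableEq V]
    (src dst : E → V) (N : E → ℕ) (ℓ : E → ℝ) (v : E → ℝ → ℝ) : Prop :=
  IsPwAffine N ℓ v ∧ ∀ w : V, vtxSum src dst ℓ v w = 0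

/-- The subinterval-wise (broken) spatial derivative of a piecewise affine family `v`:
on the subinterval of the mesh containing `x`, it is the slope of `v e` there. -/
noncomputable def Dx {E : Type} (N : E → ℕ) (ℓ : E → ℝ) (v : E → ℝ → ℝ)
    (e : E) (x : ℝ) : ℝ :=
  let i : ℕ := min (N e - 1) ⌊x * (N e : ℝ) / ℓ e⌋₊
  (v e (((i : ℝ) + 1) * ℓ e / (N e : ℝ)) - v e ((i : ℝ) * ℓ e / (N e : ℝ)))
    * ((N e : ℝ) / ℓ e)

/-- The nonlinear system of one step of the fully discrete scheme (Problem 5.1) with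
time step `τ`, determining the new state `(ρn, mn) ∈ Q_h × V_h` from the old state
`(ρp, mp)`: for all `q_h ∈ Q_h` and all `v_h ∈ V_h`,
`((ρⁿ - ρⁿ⁻¹)/τ, q_h)_E = -(∂ₓ mⁿ, q_h)_E` and
`( (1/ρⁿ⁻¹)(mⁿ-mⁿ⁻¹)/τ - (mⁿ/(2(ρⁿ)²))(ρⁿ-ρⁿ⁻¹)/τ, v_h )_E
  = ( (mⁿ)²/(2(ρⁿ)²) + P'(ρⁿ) - (a/(ρⁿ)²) ∂ₓ mⁿ, ∂ₓ v_h )_E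
    - ( (mⁿ/(2(ρⁿ)²)) ∂ₓ mⁿ + b |mⁿ| mⁿ/(ρⁿ)², v_h )_E`,
with `P_e'(ρ) = c_e γ/(γ-1) ρ^(γ-1)` on edge `e`. -/
def FullDiscStep {V E : Type} [Fintype V] [Fintype E] [DecidableEq V]
    (src dst : E → V) (N : E → ℕ) (ℓ : E → ℝ) (γ : ℝ) (a b c : E → ℝ)
    (τ : ℝ) (ρp mp ρn mn : E → ℝ → ℝ) : Prop :=
  (∀ q : E → ℝ → ℝ, IsPwConst N ℓ q →
      pairE ℓ (fun e x => (ρn e x - ρp e x) / τ) q = -pairE ℓ (Dx N ℓ mn) q) ∧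
  (∀ v : E → ℝ → ℝ, InVh src dst N ℓ v →
      pairE ℓ (fun e x => (1 / ρp e x) * ((mn e x - mp e x) / τ)
          - mn e x / (2 * ρn e x ^ 2) * ((ρn e x - ρp e x) / τ)) v
        = pairE ℓ (fun e x => mn e x ^ 2 / (2 * ρn e x ^ 2)
              + c e * γ / (γ - 1) * ρn e x ^ (γ - 1)
              - a e / ρn e x ^ 2 * Dx N ℓ mn e x) (Dx N ℓ v)
          - pairE ℓ (fun e x => mn e x / (2 * ρn e x ^ 2) * Dx N ℓ mn e x
              + b e * |mn e x| * mn e x / ρn e x ^ 2) v)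

open MeasureTheory

lemma ae_eq_of_Ico {A B : ℝ} (hAB : A ≤ B) {f g : ℝ → ℝ}
    (h : ∀ x ∈ Set.Ico A B, f x = g x) :
    f =ᵐ[volume.restrict (Set.uIoc A B)] g := by
  rw [Set.uIoc_of_le hAB]
  have h1 : ∀ᵐ x ∂(volume.restrict (Set.Ioc A B)), x ∈ Set.Ioc A B :=
    ae_restrict_mem measurableSet_Ioc
  have h2 : ∀ᵐ x ∂(volume.restrict (Set.Ioc A B)), x ≠ B := by
    refine ae_restrict_of_ae ?_
    rw [ae_iff]
    simp only [ne_eq, not_not, Set.setOf_eq_eq_singleton]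
    exact measure_singleton B
  filter_upwards [h1, h2] with x hx hne
  exact h x ⟨hx.1.le, lt_of_le_of_ne hx.2 hne⟩

lemma integral_eq_of_Ico {A B : ℝ} (hAB : A ≤ B) {f g : ℝ → ℝ}
    (h : ∀ x ∈ Set.Ico A B, f x = g x) :
    ∫ x in A..B, f x = ∫ x in A..B, g x := by
  apply intervalIntegral.integral_congr_ae
  have h2 : ∀ᵐ (x : ℝ) ∂volume, x ≠ B := by
    rw [ae_iff]
    simp only [ne_eq, not_not, Set.setOf_eq_eq_singleton]
    exact measure_singleton B
  filter_upwards [h2] with x hne hx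
  rw [Set.uIoc_of_le hAB] at hx
  exact h x ⟨hx.1.le, lt_of_le_of_ne hx.2 hne⟩

lemma floor_piece {N : ℕ} (hN : 1 ≤ N) {ℓ : ℝ} (hℓ : 0 < ℓ) {i : ℕ} (hi : i < N) {x : ℝ}
    (hx : x ∈ Set.Ico ((i : ℝ) * ℓ / (N : ℝ)) (((i : ℝ) + 1) * ℓ / (N : ℝ))) :
    min (N - 1) ⌊x * (N : ℝ) / ℓ⌋₊ = i := by
  have hNpos : (0 : ℝ) < N := by exact_mod_cast Nat.lt_of_lt_of_le Nat.zero_lt_one hN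
  have h1 : (i : ℝ) * ℓ ≤ x * N := by
    have := hx.1
    rw [div_le_iff₀ hNpos] at this
    linarith
  have h2 : x * N < ((i : ℝ) + 1) * ℓ := by
    have := hx.2
    rw [lt_div_iff₀ hNpos] at this
    linarith
  have hx0 : 0 ≤ x := le_trans (by positivity) hx.1
  have hfl : ⌊x * (N : ℝ) / ℓ⌋₊ = i := by
    rw [Nat.floor_eq_iff (by positivity)]
    constructor
    · rw [le_div_iff₀ hℓ]; linarith
    · rw [div_lt_iff₀ hℓ]; push_cast; linarith
  rw [hfl]
  exact min_eq_right (by omega)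

lemma mesh_succ {N : ℕ} {ℓ : ℝ} (i : ℕ) :
    ((i + 1 : ℕ) : ℝ) * ℓ / (N : ℝ) = ((i : ℝ) + 1) * ℓ / (N : ℝ) := by
  push_cast; ring

lemma mesh_lt {N : ℕ} {ℓ : ℝ} (hN : 1 ≤ N) (hℓ : 0 < ℓ) (i : ℕ) :
    (i : ℝ) * ℓ / (N : ℝ) < ((i : ℝ) + 1) * ℓ / (N : ℝ) := by
  have hNpos : (0 : ℝ) < N := by exact_mod_cast Nat.lt_of_lt_of_le Nat.zero_lt_one hN
  have h1 : (i : ℝ) * ℓ < ((i : ℝ) + 1) * ℓ := by nlinarith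
  exact div_lt_div_of_pos_right h1 hNpos

lemma mesh_mem_Icc {N : ℕ} {ℓ : ℝ} (hN : 1 ≤ N) (hℓ : 0 < ℓ) {i : ℕ} (hi : i < N) :
    (i : ℝ) * ℓ / (N : ℝ) ∈ Set.Icc (0 : ℝ) ℓ := by
  have hNpos : (0 : ℝ) < N := by exact_mod_cast Nat.lt_of_lt_of_le Nat.zero_lt_one hN
  constructor
  · positivity
  · rw [div_le_iff₀ hNpos]
    have : (i : ℝ) ≤ (N : ℝ) := by exact_mod_cast hi.le
    nlinarith

lemma combo_integrable {N : ℕ} (hN : 1 ≤ N) {ℓ : ℝ} (hℓ : 0 < ℓ)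
    (r1 r2 d m1 m2 : ℝ → ℝ)
    (hr1 : ∀ i : ℕ, i < N → ∀ x ∈ Set.Ico ((i : ℝ) * ℓ / (N : ℝ)) (((i : ℝ) + 1) * ℓ / (N : ℝ)),
      r1 x = r1 ((i : ℝ) * ℓ / (N : ℝ)))
    (hr2 : ∀ i : ℕ, i < N → ∀ x ∈ Set.Ico ((i : ℝ) * ℓ / (N : ℝ)) (((i : ℝ) + 1) * ℓ / (N : ℝ)),
      r2 x = r2 ((i : ℝ) * ℓ / (N : ℝ)))
    (hd : ∀ i : ℕ, i < N → ∀ x ∈ Set.Ico ((i : ℝ) * ℓ / (N : ℝ)) (((i : ℝ) + 1) * ℓ / (N : ℝ)),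
      d x = d ((i : ℝ) * ℓ / (N : ℝ)))
    (hm1 : ∀ i : ℕ, i < N → ∃ α β : ℝ,
      ∀ x ∈ Set.Icc ((i : ℝ) * ℓ / (N : ℝ)) (((i : ℝ) + 1) * ℓ / (N : ℝ)), m1 x = α * x + β)
    (hm2 : ∀ i : ℕ, i < N → ∃ α β : ℝ,
      ∀ x ∈ Set.Icc ((i : ℝ) * ℓ / (N : ℝ)) (((i : ℝ) + 1) * ℓ / (N : ℝ)), m2 x = α * x + β)
    (F : ℝ → ℝ → ℝ → ℝ → ℝ → ℝ)
    (hF : ∀ p q s, Continuous fun yz : ℝ × ℝ => F p q s yz.1 yz.2) :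
    IntervalIntegrable (fun x => F (r1 x) (r2 x) (d x) (m1 x) (m2 x)) volume 0 ℓ := by
  have h0 : ((0 : ℕ) : ℝ) * ℓ / (N : ℝ) = 0 := by simp
  have hNl : ((N : ℕ) : ℝ) * ℓ / (N : ℝ) = ℓ := by
    have : (N : ℝ) ≠ 0 := by positivity
    field_simp
  have main : IntervalIntegrable (fun x => F (r1 x) (r2 x) (d x) (m1 x) (m2 x)) volume
      (((0 : ℕ) : ℝ) * ℓ / (N : ℝ)) (((N : ℕ) : ℝ) * ℓ / (N : ℝ)) := by
    apply IntervalIntegrable.trans_iterate (a := fun i : ℕ => (i : ℝ) * ℓ / (N : ℝ))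
    intro k hk
    obtain ⟨α1, β1, hA1⟩ := hm1 k hk
    obtain ⟨α2, β2, hA2⟩ := hm2 k hk
    simp only [mesh_succ]
    have hle : (k : ℝ) * ℓ / (N : ℝ) ≤ ((k : ℝ) + 1) * ℓ / (N : ℝ) := (mesh_lt hN hℓ k).le
    set A := (k : ℝ) * ℓ / (N : ℝ) with hA
    set B := ((k : ℝ) + 1) * ℓ / (N : ℝ) with hB
    have hg : Continuous fun x => F (r1 A) (r2 A) (d A) (α1 * x + β1) (α2 * x + β2) :=
      (hF (r1 A) (r2 A) (d A)).comp
        (Continuous.prodMk (by fun_prop) (by fun_prop))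
    apply (hg.intervalIntegrable A B).congr_ae
    apply ae_eq_of_Ico hle
    intro x hx
    have hx' : x ∈ Set.Icc A B := ⟨hx.1, hx.2.le⟩
    rw [hr1 k hk x hx, hr2 k hk x hx, hd k hk x hx, hA1 x hx', hA2 x hx']
  rwa [h0, hNl] at main

lemma integral_pwc {N : ℕ} (hN : 1 ≤ N) {ℓ : ℝ} (hℓ : 0 < ℓ) (d : ℝ → ℝ)
    (hd : ∀ i : ℕ, i < N → ∀ x ∈ Set.Ico ((i : ℝ) * ℓ / (N : ℝ)) (((i : ℝ) + 1) * ℓ / (N : ℝ)),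
      d x = d ((i : ℝ) * ℓ / (N : ℝ))) :
    ∫ x in (0 : ℝ)..ℓ, d x
      = ∑ i ∈ Finset.range N, d ((i : ℝ) * ℓ / (N : ℝ)) * (ℓ / (N : ℝ)) := by
  have hNpos : (0 : ℝ) < N := by exact_mod_cast Nat.lt_of_lt_of_le Nat.zero_lt_one hN
  have h0 : ((0 : ℕ) : ℝ) * ℓ / (N : ℝ) = 0 := by simp
  have hNl : ((N : ℕ) : ℝ) * ℓ / (N : ℝ) = ℓ := by field_simp
  have hint : ∀ k < N, IntervalIntegrable d volume ((k : ℝ) * ℓ / (N : ℝ))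
      (((k + 1 : ℕ) : ℝ) * ℓ / (N : ℝ)) := by
    intro k hk
    rw [mesh_succ]
    apply ((continuous_const (y := d ((k : ℝ) * ℓ / (N : ℝ)))).intervalIntegrable _ _).congr_ae
    apply ae_eq_of_Ico (mesh_lt hN hℓ k).le
    intro x hx
    exact (hd k hk x hx).symm
  have hsum := intervalIntegral.sum_integral_adjacent_intervals
    (a := fun i : ℕ => (i : ℝ) * ℓ / (N : ℝ)) (μ := volume) (f := d) (n := N) hint
  rw [h0, hNl] at hsum
  rw [← hsum]
  apply Finset.sum_congr rfl
  intro i hi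
  have hi' : i < N := Finset.mem_range.mp hi
  rw [mesh_succ]
  rw [integral_eq_of_Ico (mesh_lt hN hℓ i).le (hd i hi')]
  rw [intervalIntegral.integral_const]
  rw [smul_eq_mul, mul_comm]
  congr 1
  field_simp
  ring

lemma Dx_piece {E : Type} (N : E → ℕ) (ℓ : E → ℝ) (v : E → ℝ → ℝ) (e : E)
    (hN : 1 ≤ N e) (hℓ : 0 < ℓ e) {i : ℕ} (hi : i < N e) {x : ℝ}
    (hx : x ∈ Set.Ico ((i : ℝ) * ℓ e / (N e : ℝ)) (((i : ℝ) + 1) * ℓ e / (N e : ℝ))) :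
    Dx N ℓ v e x
      = (v e (((i : ℝ) + 1) * ℓ e / (N e : ℝ)) - v e ((i : ℝ) * ℓ e / (N e : ℝ)))
          * ((N e : ℝ) / ℓ e) := by
  simp only [Dx]
  rw [floor_piece hN hℓ hi hx]

lemma Dx_pwc {E : Type} (N : E → ℕ) (ℓ : E → ℝ) (v : E → ℝ → ℝ) (e : E)
    (hN : 1 ≤ N e) (hℓ : 0 < ℓ e) :
    ∀ i : ℕ, i < N e →
      ∀ x ∈ Set.Ico ((i : ℝ) * ℓ e / (N e : ℝ)) (((i : ℝ) + 1) * ℓ e / (N e : ℝ)),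
        Dx N ℓ v e x = Dx N ℓ v e ((i : ℝ) * ℓ e / (N e : ℝ)) := by
  intro i hi x hx
  have hz : (i : ℝ) * ℓ e / (N e : ℝ)
      ∈ Set.Ico ((i : ℝ) * ℓ e / (N e : ℝ)) (((i : ℝ) + 1) * ℓ e / (N e : ℝ)) :=
    ⟨le_refl _, mesh_lt hN hℓ i⟩
  rw [Dx_piece N ℓ v e hN hℓ hi hx, Dx_piece N ℓ v e hN hℓ hi hz]

lemma integral_Dx {E : Type} (N : E → ℕ) (ℓ : E → ℝ) (v : E → ℝ → ℝ) (e : E)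
    (hN : 1 ≤ N e) (hℓ : 0 < ℓ e) :
    ∫ x in (0 : ℝ)..(ℓ e), Dx N ℓ v e x = v e (ℓ e) - v e 0 := by
  rw [integral_pwc hN hℓ _ (Dx_pwc N ℓ v e hN hℓ)]
  have hNpos : (0 : ℝ) < N e := by exact_mod_cast Nat.lt_of_lt_of_le Nat.zero_lt_one hN
  have key : ∀ i ∈ Finset.range (N e),
      Dx N ℓ v e ((i : ℝ) * ℓ e / (N e : ℝ)) * (ℓ e / (N e : ℝ))
        = v e (((i + 1 : ℕ) : ℝ) * ℓ e / (N e : ℝ)) - v e ((i : ℝ) * ℓ e / (N e : ℝ)) := by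
    intro i hi
    have hi' : i < N e := Finset.mem_range.mp hi
    have hz : (i : ℝ) * ℓ e / (N e : ℝ)
        ∈ Set.Ico ((i : ℝ) * ℓ e / (N e : ℝ)) (((i : ℝ) + 1) * ℓ e / (N e : ℝ)) :=
      ⟨le_refl _, mesh_lt hN hℓ i⟩
    rw [Dx_piece N ℓ v e hN hℓ hi' hz, mesh_succ]
    field_simp
  rw [Finset.sum_congr rfl key]
  rw [Finset.sum_range_sub (f := fun i : ℕ => v e ((i : ℝ) * ℓ e / (N e : ℝ)))]
  have h0 : ((0 : ℕ) : ℝ) * ℓ e / (N e : ℝ) = 0 := by simp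
  have hNl : ((N e : ℕ) : ℝ) * ℓ e / (N e : ℝ) = ℓ e := by field_simp
  rw [h0, hNl]

lemma sum_boundary {V E : Type} [Fintype V] [Fintype E] [DecidableEq V]
    (src dst : E → V) (ℓ : E → ℝ) (v : E → ℝ → ℝ)
    (hv : ∀ w : V, vtxSum src dst ℓ v w = 0) :
    ∑ e, (v e (ℓ e) - v e 0) = 0 := by
  have h : ∑ w : V, vtxSum src dst ℓ v w = ∑ e, (v e (ℓ e) - v e 0) := by
    unfold vtxSum
    rw [Finset.sum_comm]
    apply Finset.sum_congr rfl
    intro e _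
    rw [Finset.sum_sub_distrib]
    simp [Finset.sum_ite_eq]
  rw [← h]
  simp [hv]

lemma pot_convex {γ : ℝ} (hγ : 1 < γ) {r s : ℝ} (hr : 0 < r) (hs : 0 < s) :
    r ^ γ - s ^ γ ≤ γ * r ^ (γ - 1) * (r - s) := by
  have hz : -1 ≤ s / r - 1 := by
    have : 0 ≤ s / r := by positivity
    linarith
  have hb := one_add_mul_self_le_rpow_one_add hz hγ.le
  have he : (1 : ℝ) + (s / r - 1) = s / r := by ring
  rw [he] at hb
  have h2 : (s / r) ^ γ = s ^ γ / r ^ γ := Real.div_rpow hs.le hr.le γ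
  rw [h2] at hb
  have hrγ : 0 < r ^ γ := Real.rpow_pos_of_pos hr γ
  have h3 : r ^ (γ - 1) = r ^ γ / r := by
    rw [Real.rpow_sub hr, Real.rpow_one]
  have h4 : r ^ γ * (1 + γ * (s / r - 1)) ≤ s ^ γ := by
    calc r ^ γ * (1 + γ * (s / r - 1)) ≤ r ^ γ * (s ^ γ / r ^ γ) :=
          mul_le_mul_of_nonneg_left hb hrγ.le
      _ = s ^ γ := by field_simp
  rw [h3]
  have hr' : r ≠ 0 := hr.ne'
  have hexp : r ^ γ * (1 + γ * (s / r - 1)) = r ^ γ + γ * (r ^ γ / r) * s - γ * r ^ γ := by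
    field_simp
    ring
  rw [hexp] at h4
  have hexp2 : γ * (r ^ γ / r) * (r - s) = γ * r ^ γ - γ * (r ^ γ / r) * s := by
    field_simp
  rw [hexp2]
  linarith


lemma pot_convex' {γ τ cc r s : ℝ} (hγ : 1 < γ) (hc : 0 < cc) (hτ : 0 < τ)
    (hr : 0 < r) (hs : 0 < s) :
    (cc * r ^ γ / (γ - 1) - cc * s ^ γ / (γ - 1)) / τ
      ≤ (r - s) / τ * (cc * γ / (γ - 1) * r ^ (γ - 1)) := by
  have hγ1 : (0:ℝ) < γ - 1 := by linarith
  have key := pot_convex hγ hr hs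
  have hpos : (0:ℝ) < cc / ((γ - 1) * τ) := by positivity
  have h := mul_le_mul_of_nonneg_left key hpos.le
  calc (cc * r ^ γ / (γ - 1) - cc * s ^ γ / (γ - 1)) / τ
      = cc / ((γ - 1) * τ) * (r ^ γ - s ^ γ) := by field_simp
    _ ≤ cc / ((γ - 1) * τ) * (γ * r ^ (γ - 1) * (r - s)) := h
    _ = (r - s) / τ * (cc * γ / (γ - 1) * r ^ (γ - 1)) := by field_simp

lemma kin_ineq {τ r s M Mb : ℝ} (hτ : 0 < τ) (hr : 0 < r) (hs : 0 < s) :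
    (M ^ 2 / (2 * r) - Mb ^ 2 / (2 * s)) / τ
      ≤ ((1 / s) * ((M - Mb) / τ) - M / (2 * r ^ 2) * ((r - s) / τ)) * M := by
  have key : ((1 / s) * ((M - Mb) / τ) - M / (2 * r ^ 2) * ((r - s) / τ)) * M
      - (M ^ 2 / (2 * r) - Mb ^ 2 / (2 * s)) / τ
      = ((M - Mb) ^ 2 / (2 * s) + M ^ 2 * (r - s) ^ 2 / (2 * r ^ 2 * s)) / τ := by
    field_simp
    ring
  have h2 : 0 ≤ ((M - Mb) ^ 2 / (2 * s) + M ^ 2 * (r - s) ^ 2 / (2 * r ^ 2 * s)) / τ := by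
    positivity
  linarith
/-- **Conservation of mass and discrete energy inequality for the fully discrete scheme
(Lemma 5.2).**  Let `τ > 0` and let `(ρ n, m n) ∈ Q_h × V_h`, `n ≥ 0`, with positive
densities, be generated by the fully discrete scheme.  Then for every `n`:
`Σ_e ∫_0^{ℓ_e} ρⁿ dx = Σ_e ∫_0^{ℓ_e} ρ⁰ dx`, and
`Σ_e ∫_0^{ℓ_e} ( (mⁿ)²/(2ρⁿ) + P(ρⁿ) ) dx
  + τ Σ_{k=1}^n Σ_e ∫_0^{ℓ_e} ( a_e |∂ₓ mᵏ|²/(ρᵏ)² + b_e |mᵏ|³/(ρᵏ)² ) dx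
 ≤ Σ_e ∫_0^{ℓ_e} ( (m⁰)²/(2ρ⁰) + P(ρ⁰) ) dx`,
with `P_e(ρ) = c_e ρ^γ/(γ-1)` on edge `e`. -/
theorem fullydiscrete_mass_conservation_and_energy_inequality
    {V E : Type} [Fintype V] [Fintype E] [DecidableEq V]
    (src dst : E → V) (N : E → ℕ) (hN : ∀ e, 1 ≤ N e)
    (ℓ : E → ℝ) (hℓ : ∀ e, 0 < ℓ e)
    (γ : ℝ) (hγ : 1 < γ) (a b c : E → ℝ)
    (ha : ∀ e, 0 ≤ a e) (hb : ∀ e, 0 ≤ b e) (hc : ∀ e, 0 < c e)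
    (τ : ℝ) (hτ : 0 < τ)
    (ρ m : ℕ → E → ℝ → ℝ)
    (hmem : ∀ n, IsPwConst N ℓ (ρ n) ∧ InVh src dst N ℓ (m n))
    (hpos : ∀ n e, ∀ x ∈ Set.Icc 0 (ℓ e), 0 < ρ n e x)
    (hstep : ∀ n : ℕ,
      FullDiscStep src dst N ℓ γ a b c τ (ρ n) (m n) (ρ (n + 1)) (m (n + 1))) :
    ∀ n : ℕ,
      ((∑ e, ∫ x in (0 : ℝ)..(ℓ e), ρ n e x)
          = ∑ e, ∫ x in (0 : ℝ)..(ℓ e), ρ 0 e x) ∧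
      ((∑ e, ∫ x in (0 : ℝ)..(ℓ e),
          (m n e x ^ 2 / (2 * ρ n e x) + c e * ρ n e x ^ γ / (γ - 1)))
        + τ * ∑ k ∈ Finset.Icc 1 n, ∑ e, ∫ x in (0 : ℝ)..(ℓ e),
            (a e * Dx N ℓ (m k) e x ^ 2 / ρ k e x ^ 2
              + b e * |m k e x| ^ 3 / ρ k e x ^ 2)
        ≤ ∑ e, ∫ x in (0 : ℝ)..(ℓ e),
            (m 0 e x ^ 2 / (2 * ρ 0 e x) + c e * ρ 0 e x ^ γ / (γ - 1))) := by
  classical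
  have hpwρ : ∀ n, IsPwConst N ℓ (ρ n) := fun n => (hmem n).1
  have haff : ∀ n e, ∀ i : ℕ, i < N e → ∃ α β : ℝ,
      ∀ x ∈ Set.Icc ((i : ℝ) * ℓ e / (N e : ℝ)) (((i : ℝ) + 1) * ℓ e / (N e : ℝ)),
        m n e x = α * x + β := fun n e => (hmem n).2.1.2 e
  have key : ∀ (F : ℝ → ℝ → ℝ → ℝ → ℝ → ℝ),
      (∀ p q s, Continuous fun yz : ℝ × ℝ => F p q s yz.1 yz.2) →
      ∀ (n : ℕ) (e : E), IntervalIntegrable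
        (fun x => F (ρ (n+1) e x) (ρ n e x) (Dx N ℓ (m (n+1)) e x)
          (m (n+1) e x) (m n e x)) MeasureTheory.volume 0 (ℓ e) := by
    intro F hF n e
    exact combo_integrable (hN e) (hℓ e) _ _ _ _ _
      (hpwρ (n+1) e) (hpwρ n e) (Dx_pwc N ℓ (m (n+1)) e (hN e) (hℓ e))
      (haff (n+1) e) (haff n e) F hF
  -- mass conservation, one step
  have hmass : ∀ n : ℕ, (∑ e, ∫ x in (0:ℝ)..(ℓ e), ρ (n+1) e x)
      = ∑ e, ∫ x in (0:ℝ)..(ℓ e), ρ n e x := by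
    intro n
    have hq : IsPwConst N ℓ (fun _ _ => (1:ℝ)) := fun e i hi x hx => rfl
    have h := (hstep n).1 _ hq
    simp only [pairE, mul_one] at h
    have hR : (∑ e, ∫ x in (0:ℝ)..(ℓ e), Dx N ℓ (m (n+1)) e x) = 0 := by
      rw [Finset.sum_congr rfl
        (fun e _ => integral_Dx N ℓ (m (n+1)) e (hN e) (hℓ e))]
      exact sum_boundary src dst ℓ (m (n+1)) (hmem (n+1)).2.2
    rw [hR, neg_zero] at h
    have hsplit : ∀ e : E, (∫ x in (0:ℝ)..(ℓ e), (ρ (n+1) e x - ρ n e x) / τ)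
        = ((∫ x in (0:ℝ)..(ℓ e), ρ (n+1) e x) - ∫ x in (0:ℝ)..(ℓ e), ρ n e x) / τ := by
      intro e
      rw [intervalIntegral.integral_div]
      congr 1
      exact intervalIntegral.integral_sub
        (key (fun p q s y1 y2 => p) (fun _ _ _ => continuous_const) n e)
        (key (fun p q s y1 y2 => q) (fun _ _ _ => continuous_const) n e)
    rw [Finset.sum_congr rfl (fun e _ => hsplit e), ← Finset.sum_div,
      Finset.sum_sub_distrib] at h
    have h2 := (div_eq_zero_iff.mp h).resolve_right hτ.ne'
    linarith
  -- energy inequality, one step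
  have heng : ∀ n : ℕ,
      (∑ e, ∫ x in (0:ℝ)..(ℓ e),
        (m (n+1) e x ^ 2 / (2 * ρ (n+1) e x) + c e * ρ (n+1) e x ^ γ / (γ - 1)))
      + τ * (∑ e, ∫ x in (0:ℝ)..(ℓ e),
          (a e * Dx N ℓ (m (n+1)) e x ^ 2 / ρ (n+1) e x ^ 2
            + b e * |m (n+1) e x| ^ 3 / ρ (n+1) e x ^ 2))
      ≤ ∑ e, ∫ x in (0:ℝ)..(ℓ e),
          (m n e x ^ 2 / (2 * ρ n e x) + c e * ρ n e x ^ γ / (γ - 1)) := by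
    intro n
    have hγ1 : (0:ℝ) < γ - 1 := by linarith
    have hmom := (hstep n).2 (m (n+1)) (hmem (n+1)).2
    have hqP : IsPwConst N ℓ (fun e x => c e * γ / (γ - 1) * ρ (n+1) e x ^ (γ - 1)) := by
      intro e i hi x hx
      simp only
      rw [hpwρ (n+1) e i hi x hx]
    have hcont := (hstep n).1 _ hqP
    simp only [pairE] at hmom hcont
    -- integrability of the various integrands
    have I1 : ∀ e : E, IntervalIntegrable (fun x =>
        m (n+1) e x ^ 2 / (2 * ρ (n+1) e x ^ 2) * Dx N ℓ (m (n+1)) e x)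
        MeasureTheory.volume 0 (ℓ e) :=
      fun e => key (fun p q s y1 y2 => y1 ^ 2 / (2 * p ^ 2) * s)
        (fun p q s => by fun_prop) n e
    have I2 : ∀ e : E, IntervalIntegrable (fun x =>
        c e * γ / (γ - 1) * ρ (n+1) e x ^ (γ - 1) * Dx N ℓ (m (n+1)) e x)
        MeasureTheory.volume 0 (ℓ e) :=
      fun e => key (fun p q s y1 y2 => c e * γ / (γ - 1) * p ^ (γ - 1) * s)
        (fun p q s => by fun_prop) n e
    have I3 : ∀ e : E, IntervalIntegrable (fun x =>
        a e * Dx N ℓ (m (n+1)) e x ^ 2 / ρ (n+1) e x ^ 2)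
        MeasureTheory.volume 0 (ℓ e) :=
      fun e => key (fun p q s y1 y2 => a e * s ^ 2 / p ^ 2)
        (fun p q s => by fun_prop) n e
    have I23 : ∀ e : E, IntervalIntegrable (fun x =>
        c e * γ / (γ - 1) * ρ (n+1) e x ^ (γ - 1) * Dx N ℓ (m (n+1)) e x
          - a e * Dx N ℓ (m (n+1)) e x ^ 2 / ρ (n+1) e x ^ 2)
        MeasureTheory.volume 0 (ℓ e) :=
      fun e => key (fun p q s y1 y2 =>
          c e * γ / (γ - 1) * p ^ (γ - 1) * s - a e * s ^ 2 / p ^ 2)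
        (fun p q s => by fun_prop) n e
    have I4 : ∀ e : E, IntervalIntegrable (fun x =>
        m (n+1) e x / (2 * ρ (n+1) e x ^ 2) * Dx N ℓ (m (n+1)) e x * m (n+1) e x)
        MeasureTheory.volume 0 (ℓ e) :=
      fun e => key (fun p q s y1 y2 => y1 / (2 * p ^ 2) * s * y1)
        (fun p q s => by fun_prop) n e
    have I5 : ∀ e : E, IntervalIntegrable (fun x =>
        b e * |m (n+1) e x| ^ 3 / ρ (n+1) e x ^ 2)
        MeasureTheory.volume 0 (ℓ e) :=
      fun e => key (fun p q s y1 y2 => b e * |y1| ^ 3 / p ^ 2)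
        (fun p q s => by fun_prop) n e
    have I6 : ∀ e : E, IntervalIntegrable (fun x =>
        a e * Dx N ℓ (m (n+1)) e x ^ 2 / ρ (n+1) e x ^ 2
          + b e * |m (n+1) e x| ^ 3 / ρ (n+1) e x ^ 2)
        MeasureTheory.volume 0 (ℓ e) :=
      fun e => key (fun p q s y1 y2 => a e * s ^ 2 / p ^ 2 + b e * |y1| ^ 3 / p ^ 2)
        (fun p q s => by fun_prop) n e
    have IKN : ∀ e : E, IntervalIntegrable (fun x =>
        m (n+1) e x ^ 2 / (2 * ρ (n+1) e x)) MeasureTheory.volume 0 (ℓ e) :=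
      fun e => key (fun p q s y1 y2 => y1 ^ 2 / (2 * p))
        (fun p q s => by fun_prop) n e
    have IKO : ∀ e : E, IntervalIntegrable (fun x =>
        m n e x ^ 2 / (2 * ρ n e x)) MeasureTheory.volume 0 (ℓ e) :=
      fun e => key (fun p q s y1 y2 => y2 ^ 2 / (2 * q))
        (fun p q s => by fun_prop) n e
    have IPN : ∀ e : E, IntervalIntegrable (fun x =>
        c e * ρ (n+1) e x ^ γ / (γ - 1)) MeasureTheory.volume 0 (ℓ e) :=
      fun e => key (fun p q s y1 y2 => c e * p ^ γ / (γ - 1))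
        (fun p q s => by fun_prop) n e
    have IPO : ∀ e : E, IntervalIntegrable (fun x =>
        c e * ρ n e x ^ γ / (γ - 1)) MeasureTheory.volume 0 (ℓ e) :=
      fun e => key (fun p q s y1 y2 => c e * q ^ γ / (γ - 1))
        (fun p q s => by fun_prop) n e
    have IKIN : ∀ e : E, IntervalIntegrable (fun x =>
        (m (n+1) e x ^ 2 / (2 * ρ (n+1) e x) - m n e x ^ 2 / (2 * ρ n e x)) / τ)
        MeasureTheory.volume 0 (ℓ e) :=
      fun e => key (fun p q s y1 y2 => (y1 ^ 2 / (2 * p) - y2 ^ 2 / (2 * q)) / τ)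
        (fun p q s => by fun_prop) n e
    have IF1 : ∀ e : E, IntervalIntegrable (fun x =>
        (1 / ρ n e x * ((m (n+1) e x - m n e x) / τ)
          - m (n+1) e x / (2 * ρ (n+1) e x ^ 2) * ((ρ (n+1) e x - ρ n e x) / τ))
            * m (n+1) e x) MeasureTheory.volume 0 (ℓ e) :=
      fun e => key (fun p q s y1 y2 =>
          (1 / q * ((y1 - y2) / τ) - y1 / (2 * p ^ 2) * ((p - q) / τ)) * y1)
        (fun p q s => by fun_prop) n e
    have IPD : ∀ e : E, IntervalIntegrable (fun x =>
        (c e * ρ (n+1) e x ^ γ / (γ - 1) - c e * ρ n e x ^ γ / (γ - 1)) / τ)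
        MeasureTheory.volume 0 (ℓ e) :=
      fun e => key (fun p q s y1 y2 => (c e * p ^ γ / (γ - 1) - c e * q ^ γ / (γ - 1)) / τ)
        (fun p q s => by fun_prop) n e
    have IX : ∀ e : E, IntervalIntegrable (fun x =>
        (ρ (n+1) e x - ρ n e x) / τ * (c e * γ / (γ - 1) * ρ (n+1) e x ^ (γ - 1)))
        MeasureTheory.volume 0 (ℓ e) :=
      fun e => key (fun p q s y1 y2 => (p - q) / τ * (c e * γ / (γ - 1) * p ^ (γ - 1)))
        (fun p q s => by fun_prop) n e
    -- split of the first pairing on the right-hand side of the momentum equation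
    have hsplit1 : ∀ e : E, (∫ x in (0:ℝ)..(ℓ e),
        (m (n+1) e x ^ 2 / (2 * ρ (n+1) e x ^ 2)
          + c e * γ / (γ - 1) * ρ (n+1) e x ^ (γ - 1)
          - a e / ρ (n+1) e x ^ 2 * Dx N ℓ (m (n+1)) e x) * Dx N ℓ (m (n+1)) e x)
        = (∫ x in (0:ℝ)..(ℓ e),
            m (n+1) e x ^ 2 / (2 * ρ (n+1) e x ^ 2) * Dx N ℓ (m (n+1)) e x)
          + ((∫ x in (0:ℝ)..(ℓ e),
              c e * γ / (γ - 1) * ρ (n+1) e x ^ (γ - 1) * Dx N ℓ (m (n+1)) e x)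
            - ∫ x in (0:ℝ)..(ℓ e),
              a e * Dx N ℓ (m (n+1)) e x ^ 2 / ρ (n+1) e x ^ 2) := by
      intro e
      rw [← intervalIntegral.integral_sub (I2 e) (I3 e),
        ← intervalIntegral.integral_add (I1 e) (I23 e)]
      apply intervalIntegral.integral_congr
      intro x _
      ring
    -- split of the second pairing on the right-hand side of the momentum equation
    have hsplit2 : ∀ e : E, (∫ x in (0:ℝ)..(ℓ e),
        (m (n+1) e x / (2 * ρ (n+1) e x ^ 2) * Dx N ℓ (m (n+1)) e x
          + b e * |m (n+1) e x| * m (n+1) e x / ρ (n+1) e x ^ 2) * m (n+1) e x)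
        = (∫ x in (0:ℝ)..(ℓ e),
            m (n+1) e x / (2 * ρ (n+1) e x ^ 2) * Dx N ℓ (m (n+1)) e x * m (n+1) e x)
          + ∫ x in (0:ℝ)..(ℓ e),
            b e * |m (n+1) e x| ^ 3 / ρ (n+1) e x ^ 2 := by
      intro e
      rw [← intervalIntegral.integral_add (I4 e) (I5 e)]
      apply intervalIntegral.integral_congr
      intro x _
      beta_reduce
      have habs : |m (n+1) e x| ^ 3 = |m (n+1) e x| * m (n+1) e x ^ 2 := by
        rw [pow_succ', sq_abs]
      rw [habs]
      ring
    -- the two kinetic-flux terms coincide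
    have hKK : ∀ e : E, (∫ x in (0:ℝ)..(ℓ e),
        m (n+1) e x ^ 2 / (2 * ρ (n+1) e x ^ 2) * Dx N ℓ (m (n+1)) e x)
        = ∫ x in (0:ℝ)..(ℓ e),
          m (n+1) e x / (2 * ρ (n+1) e x ^ 2) * Dx N ℓ (m (n+1)) e x * m (n+1) e x := by
      intro e
      apply intervalIntegral.integral_congr
      intro x _
      ring
    -- rewrite the pressure term using the discrete continuity equation
    have hXD : (∑ e, ∫ x in (0:ℝ)..(ℓ e),
        c e * γ / (γ - 1) * ρ (n+1) e x ^ (γ - 1) * Dx N ℓ (m (n+1)) e x)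
        = - ∑ e, ∫ x in (0:ℝ)..(ℓ e),
            (ρ (n+1) e x - ρ n e x) / τ * (c e * γ / (γ - 1) * ρ (n+1) e x ^ (γ - 1)) := by
      rw [hcont]
      rw [neg_neg]
      apply Finset.sum_congr rfl
      intro e _
      apply intervalIntegral.integral_congr
      intro x _
      ring
    -- pointwise kinetic energy inequality, integrated
    have hkin : (∑ e, ∫ x in (0:ℝ)..(ℓ e),
        (m (n+1) e x ^ 2 / (2 * ρ (n+1) e x) - m n e x ^ 2 / (2 * ρ n e x)) / τ)
        ≤ ∑ e, ∫ x in (0:ℝ)..(ℓ e),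
          (1 / ρ n e x * ((m (n+1) e x - m n e x) / τ)
            - m (n+1) e x / (2 * ρ (n+1) e x ^ 2) * ((ρ (n+1) e x - ρ n e x) / τ))
              * m (n+1) e x := by
      apply Finset.sum_le_sum
      intro e _
      apply intervalIntegral.integral_mono_on (hℓ e).le (IKIN e) (IF1 e)
      intro x hx
      exact kin_ineq hτ (hpos (n+1) e x hx) (hpos n e x hx)
    -- pointwise potential energy (convexity) inequality, integrated
    have hpot : (∑ e, ∫ x in (0:ℝ)..(ℓ e),
        (c e * ρ (n+1) e x ^ γ / (γ - 1) - c e * ρ n e x ^ γ / (γ - 1)) / τ)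
        ≤ ∑ e, ∫ x in (0:ℝ)..(ℓ e),
          (ρ (n+1) e x - ρ n e x) / τ * (c e * γ / (γ - 1) * ρ (n+1) e x ^ (γ - 1)) := by
      apply Finset.sum_le_sum
      intro e _
      apply intervalIntegral.integral_mono_on (hℓ e).le (IPD e) (IX e)
      intro x hx
      exact pot_convex' hγ (hc e) hτ (hpos (n+1) e x hx) (hpos n e x hx)
    -- split integrals of differences and sums
    have hkinsplit : ∀ e : E, (∫ x in (0:ℝ)..(ℓ e),
        (m (n+1) e x ^ 2 / (2 * ρ (n+1) e x) - m n e x ^ 2 / (2 * ρ n e x)) / τ)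
        = ((∫ x in (0:ℝ)..(ℓ e), m (n+1) e x ^ 2 / (2 * ρ (n+1) e x))
          - ∫ x in (0:ℝ)..(ℓ e), m n e x ^ 2 / (2 * ρ n e x)) / τ := by
      intro e
      rw [intervalIntegral.integral_div]
      congr 1
      exact intervalIntegral.integral_sub (IKN e) (IKO e)
    have hpotsplit : ∀ e : E, (∫ x in (0:ℝ)..(ℓ e),
        (c e * ρ (n+1) e x ^ γ / (γ - 1) - c e * ρ n e x ^ γ / (γ - 1)) / τ)
        = ((∫ x in (0:ℝ)..(ℓ e), c e * ρ (n+1) e x ^ γ / (γ - 1))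
          - ∫ x in (0:ℝ)..(ℓ e), c e * ρ n e x ^ γ / (γ - 1)) / τ := by
      intro e
      rw [intervalIntegral.integral_div]
      congr 1
      exact intervalIntegral.integral_sub (IPN e) (IPO e)
    have hEN : ∀ e : E, (∫ x in (0:ℝ)..(ℓ e),
        (m (n+1) e x ^ 2 / (2 * ρ (n+1) e x) + c e * ρ (n+1) e x ^ γ / (γ - 1)))
        = (∫ x in (0:ℝ)..(ℓ e), m (n+1) e x ^ 2 / (2 * ρ (n+1) e x))
          + ∫ x in (0:ℝ)..(ℓ e), c e * ρ (n+1) e x ^ γ / (γ - 1) :=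
      fun e => intervalIntegral.integral_add (IKN e) (IPN e)
    have hEO : ∀ e : E, (∫ x in (0:ℝ)..(ℓ e),
        (m n e x ^ 2 / (2 * ρ n e x) + c e * ρ n e x ^ γ / (γ - 1)))
        = (∫ x in (0:ℝ)..(ℓ e), m n e x ^ 2 / (2 * ρ n e x))
          + ∫ x in (0:ℝ)..(ℓ e), c e * ρ n e x ^ γ / (γ - 1) :=
      fun e => intervalIntegral.integral_add (IKO e) (IPO e)
    have hDISsplit : ∀ e : E, (∫ x in (0:ℝ)..(ℓ e),
        (a e * Dx N ℓ (m (n+1)) e x ^ 2 / ρ (n+1) e x ^ 2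
          + b e * |m (n+1) e x| ^ 3 / ρ (n+1) e x ^ 2))
        = (∫ x in (0:ℝ)..(ℓ e), a e * Dx N ℓ (m (n+1)) e x ^ 2 / ρ (n+1) e x ^ 2)
          + ∫ x in (0:ℝ)..(ℓ e), b e * |m (n+1) e x| ^ 3 / ρ (n+1) e x ^ 2 :=
      fun e => intervalIntegral.integral_add (I3 e) (I5 e)
    -- assemble
    rw [Finset.sum_congr rfl (fun e _ => hsplit1 e),
      Finset.sum_congr rfl (fun e _ => hsplit2 e)] at hmom
    rw [Finset.sum_congr rfl (fun e _ => hkinsplit e), ← Finset.sum_div,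
      Finset.sum_sub_distrib] at hkin
    rw [Finset.sum_congr rfl (fun e _ => hpotsplit e), ← Finset.sum_div,
      Finset.sum_sub_distrib] at hpot
    rw [Finset.sum_add_distrib, Finset.sum_add_distrib, Finset.sum_sub_distrib,
      Finset.sum_congr rfl (fun e _ => hKK e), hXD] at hmom
    rw [Finset.sum_congr rfl (fun e _ => hEN e),
      Finset.sum_congr rfl (fun e _ => hDISsplit e), Finset.sum_add_distrib,
      Finset.sum_add_distrib]
    rw [Finset.sum_congr rfl (fun e _ => hEO e), Finset.sum_add_distrib]
    -- now pure arithmetic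
    set KN := ∑ e, ∫ x in (0:ℝ)..(ℓ e), m (n+1) e x ^ 2 / (2 * ρ (n+1) e x) with hKN
    set KO := ∑ e, ∫ x in (0:ℝ)..(ℓ e), m n e x ^ 2 / (2 * ρ n e x) with hKO
    set PN := ∑ e, ∫ x in (0:ℝ)..(ℓ e), c e * ρ (n+1) e x ^ γ / (γ - 1) with hPN
    set PO := ∑ e, ∫ x in (0:ℝ)..(ℓ e), c e * ρ n e x ^ γ / (γ - 1) with hPO
    set DA := ∑ e, ∫ x in (0:ℝ)..(ℓ e),
      a e * Dx N ℓ (m (n+1)) e x ^ 2 / ρ (n+1) e x ^ 2 with hDA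
    set DB := ∑ e, ∫ x in (0:ℝ)..(ℓ e),
      b e * |m (n+1) e x| ^ 3 / ρ (n+1) e x ^ 2 with hDB
    set X := ∑ e, ∫ x in (0:ℝ)..(ℓ e),
      (ρ (n+1) e x - ρ n e x) / τ * (c e * γ / (γ - 1) * ρ (n+1) e x ^ (γ - 1)) with hX
    -- hkin : (KN - KO)/τ ≤ RHS_mom_LHS ; hmom relates it to -X - DA - DB ; hpot: (PN-PO)/τ ≤ X
    have hcomb : (KN - KO) / τ + (PN - PO) / τ ≤ -DA - DB := by linarith
    have hcomb2 : (KN - KO + (PN - PO)) / τ ≤ -DA - DB := by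
      rw [add_div]; exact hcomb
    have hfin := (div_le_iff₀ hτ).mp hcomb2
    have hτDAB : τ * (DA + DB) = (-DA - DB) * τ * (-1) := by ring
    nlinarith [hfin]
  -- conclusion by induction
  intro n
  induction n with
  | zero =>
      refine ⟨rfl, ?_⟩
      rw [Finset.Icc_eq_empty (by omega)]
      simp
  | succ k ih =>
      refine ⟨(hmass k).trans ih.1, ?_⟩
      have h1 := heng k
      have h2 := ih.2
      rw [Finset.sum_Icc_succ_top (by omega : 1 ≤ k + 1), mul_add]
      linarith
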